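/- Let d be a positive integer, let G be a d-degenerate graph, let X ⊆ V(G), and let Y ⊆ V(G) \ X. Then the number of vertices of Y having at least d + 1 neighbors in X is at most binom(|X|, d+1) · d. -/

import Mathlib

open SimpleGraph

/-- A graph `G` is `d`-degenerate if every nonempty (induced) subgraph of `G` has a vertex of
degree at most `d`: for every nonempty vertex subset `s` there is `v ∈ s` with at most `d`
neighbors inside `s`. -/
def Degenerate {V : Type*} (G : SimpleGraph V) (d : ℕ) : Prop :=
  ∀ s : Set V, s.Nonempty → ∃ v ∈ s, (G.neighborSet v ∩ s).ncard ≤ d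

/-- If `G` is `d`-degenerate, `X ⊆ V(G)` and `Y ⊆ V(G) \ X`, then the number of vertices of `Y`
having at least `d + 1` neighbors in `X` is at most `binom(|X|, d+1) · d`. -/
theorem stmt_10 {V : Type*} [Fintype V] (G : SimpleGraph V) (d : ℕ) (hd : 0 < d)
    (hdeg : Degenerate G d) (X Y : Set V) (hY : ∀ y ∈ Y, y ∉ X) :
    {y ∈ Y | d + 1 ≤ (G.neighborSet y ∩ X).ncard}.ncard ≤ (X.ncard).choose (d + 1) * d := by
  classical
  set A : Set V := {y ∈ Y | d + 1 ≤ (G.neighborSet y ∩ X).ncard} with hA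
  have hex : ∀ y : V, ∃ S : Finset V,
      y ∈ A → S.card = d + 1 ∧ (↑S : Set V) ⊆ G.neighborSet y ∩ X := by
    intro y
    by_cases hy : y ∈ A
    · have h1 : d + 1 ≤ (G.neighborSet y ∩ X).toFinset.card := by
        rw [← Set.ncard_eq_toFinset_card']; exact hy.2
      obtain ⟨S, hS, hcard⟩ := Finset.exists_subset_card_eq h1
      exact ⟨S, fun _ => ⟨hcard, fun x hx => by simpa using hS hx⟩⟩
    · exact ⟨∅, fun h => absurd h hy⟩
  choose f hf using hex
  set AF : Finset V := A.toFinset with hAF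
  -- fiber bound: each (d+1)-set S is the image of at most d vertices of A
  have key : ∀ S : Finset V, (AF.filter (fun y => f y = S)).card ≤ d := by
    intro S
    by_contra hlt
    push_neg at hlt
    have hdle : d + 1 ≤ (AF.filter (fun y => f y = S)).card := hlt
    obtain ⟨Y', hY'sub, hY'card⟩ := Finset.exists_subset_card_eq hdle
    have hY'A : ∀ y ∈ Y', y ∈ A ∧ f y = S := by
      intro y hy
      have := hY'sub hy
      simp only [Finset.mem_filter, hAF, Set.mem_toFinset] at this
      exact this
    have hY'ne : Y'.Nonempty := Finset.card_pos.mp (by omega)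
    obtain ⟨y₀, hy₀⟩ := hY'ne
    have hScard : S.card = d + 1 := by
      have := hf y₀ (hY'A y₀ hy₀).1
      rw [(hY'A y₀ hy₀).2] at this
      exact this.1
    set s : Set V := ↑S ∪ ↑Y' with hs
    have hsne : s.Nonempty := Or.inr (Set.mem_union_right _ (by exact_mod_cast hy₀)) |>.elim
      (fun h => ⟨y₀, h⟩) (fun h => ⟨y₀, h⟩)
    obtain ⟨v, hv, hvle⟩ := hdeg s hsne
    have hsfin : s.Finite := Set.toFinite s
    rcases hv with hvS | hvY'
    · -- v ∈ S : all of Y' are neighbors of v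
      have hsub : (↑Y' : Set V) ⊆ G.neighborSet v ∩ s := by
        intro y hy
        have hy' : y ∈ Y' := by exact_mod_cast hy
        obtain ⟨hyA, hyf⟩ := hY'A y hy'
        have hvnb : v ∈ G.neighborSet y := by
          have := (hf y hyA).2
          rw [hyf] at this
          exact (this hvS).1
        exact ⟨(G.mem_neighborSet v y).mpr ((G.mem_neighborSet y v).mp hvnb).symm,
          Set.mem_union_right _ hy⟩
      have := Set.ncard_le_ncard hsub (hsfin.subset (Set.inter_subset_right))
      rw [Set.ncard_coe_finset, hY'card] at this
      omega
    · -- v ∈ Y' : all of S are neighbors of v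
      have hv' : v ∈ Y' := by exact_mod_cast hvY'
      obtain ⟨hvA, hvf⟩ := hY'A v hv'
      have hsub : (↑S : Set V) ⊆ G.neighborSet v ∩ s := by
        intro x hx
        have := (hf v hvA).2
        rw [hvf] at this
        exact ⟨(this hx).1, Set.mem_union_left _ hx⟩
      have := Set.ncard_le_ncard hsub (hsfin.subset (Set.inter_subset_right))
      rw [Set.ncard_coe_finset, hScard] at this
      omega
  -- counting
  have hmaps : ∀ y ∈ AF, f y ∈ X.toFinset.powersetCard (d + 1) := by
    intro y hy
    have hyA : y ∈ A := by simpa [hAF] using hy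
    rw [Finset.mem_powersetCard]
    refine ⟨fun x hx => ?_, (hf y hyA).1⟩
    have := (hf y hyA).2 (by exact_mod_cast hx)
    simpa using this.2
  have hcount : AF.card ≤ d * (X.toFinset.powersetCard (d + 1)).card :=
    Finset.card_le_mul_card_image_of_maps_to hmaps d (fun S _ => key S)
  rw [Finset.card_powersetCard] at hcount
  have hX : X.toFinset.card = X.ncard := (Set.ncard_eq_toFinset_card' X).symm
  have hAcard : A.ncard = AF.card := Set.ncard_eq_toFinset_card' A
  rw [hAcard]
  rw [hX] at hcount
  rw [Nat.mul_comm] at hcount; exact hcount
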